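/- Let x ≥ 1 be an integer. Define a sequence of integers P_0, P_1, P_2, … by P_0 = 1 and, for k ≥ 1, P_k = −∑_{i=0}^{k−1} [x > k−i]·P_i (equivalently, ∑_{i=0}^{k} [x > k−i]·P_i = 0 for every k ≥ 1, since [x > 0] = 1). Then for every integer k ≥ 1, P_k = [x divides k] − [x divides k−1]. -/

import Mathlib

/-- Libri's recursively defined sequence, in Iverson-bracket form:
if `x ≥ 1`, `P 0 = 1` and `P k = -∑_{i=0}^{k-1} [x > k-i]·P i` for `k ≥ 1`,
then `P k = [x ∣ k] - [x ∣ k-1]` for every `k ≥ 1`. -/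
theorem stmt_0 (x : ℤ) (hx : 1 ≤ x) (P : ℕ → ℤ) (hP0 : P 0 = 1)
    (hrec : ∀ k : ℕ, 1 ≤ k →
      P k = -∑ i ∈ Finset.range k,
        (if (k : ℤ) - (i : ℤ) < x then (1 : ℤ) else 0) * P i) :
    ∀ k : ℕ, 1 ≤ k →
      P k = (if x ∣ (k : ℤ) then (1 : ℤ) else 0) -
            (if x ∣ ((k : ℤ) - 1) then (1 : ℤ) else 0) := by
  set g : ℕ → ℤ := fun i => if x ∣ (i : ℤ) then (1 : ℤ) else 0 with hg
  obtain ⟨n, hn, hn1⟩ : ∃ n : ℕ, (n : ℤ) = x ∧ 1 ≤ n := by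
    refine ⟨x.toNat, Int.toNat_of_nonneg (by linarith), ?_⟩
    omega
  have hg0 : g 0 = 1 := by simp [hg]
  have key : ∀ k : ℕ, 1 ≤ k → P k = g k - g (k - 1) := by
    intro k
    induction k using Nat.strong_induction_on with
    | _ k IH =>
      intro hk
      rw [hrec k hk]
      rcases lt_or_ge k n with hkn | hkn
      · -- all coefficients are 1
        have hsum : (∑ i ∈ Finset.range k,
            (if (k : ℤ) - (i : ℤ) < x then (1 : ℤ) else 0) * P i)
            = ∑ i ∈ Finset.range k, P i := by
          refine Finset.sum_congr rfl fun i hi => ?_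
          have hi' := Finset.mem_range.mp hi
          have : (k : ℤ) - (i : ℤ) < x := by omega
          simp [this]
        rw [hsum, Finset.range_eq_Ico,
          ← Finset.sum_Ico_consecutive _ (Nat.zero_le 1) hk]
        have h1 : ∑ i ∈ Finset.Ico 0 1, P i = 1 := by simp [hP0]
        have h2 : ∑ i ∈ Finset.Ico 1 k, P i = g (k - 1) - g 0 := by
          rw [Finset.sum_Ico_eq_sum_range]
          have : ∀ j ∈ Finset.range (k - 1), P (1 + j) = g (j + 1) - g j := by
            intro j hj
            have hj' := Finset.mem_range.mp hj
            have e1 : 1 + j = j + 1 := by omega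
            have e2 : j + 1 - 1 = j := by omega
            rw [e1, IH (j + 1) (by omega) (by omega), e2]
          rw [Finset.sum_congr rfl this, Finset.sum_range_sub g]
        rw [h1, h2, hg0]
        have hgk : g k = 0 := by
          have : ¬ x ∣ (k : ℤ) := by
            intro h
            have := Int.le_of_dvd (by exact_mod_cast hk) h
            omega
          simp [hg, this]
        rw [hgk]
        ring
      · -- coefficients are 1 exactly for i ≥ a := k - n + 1
        set a := k - n + 1 with ha
        have hak : a ≤ k := by omega
        have hsum : (∑ i ∈ Finset.range k,
            (if (k : ℤ) - (i : ℤ) < x then (1 : ℤ) else 0) * P i)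
            = ∑ i ∈ Finset.Ico a k, P i := by
          rw [Finset.range_eq_Ico,
            ← Finset.sum_Ico_consecutive _ (Nat.zero_le a) hak]
          have h0 : ∑ i ∈ Finset.Ico 0 a,
              (if (k : ℤ) - (i : ℤ) < x then (1 : ℤ) else 0) * P i = 0 := by
            refine Finset.sum_eq_zero fun i hi => ?_
            have hi' := Finset.mem_Ico.mp hi
            have : ¬ ((k : ℤ) - (i : ℤ) < x) := by omega
            simp [this]
          have h1 : ∑ i ∈ Finset.Ico a k,
              (if (k : ℤ) - (i : ℤ) < x then (1 : ℤ) else 0) * P i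
              = ∑ i ∈ Finset.Ico a k, P i := by
            refine Finset.sum_congr rfl fun i hi => ?_
            have hi' := Finset.mem_Ico.mp hi
            have : (k : ℤ) - (i : ℤ) < x := by omega
            simp [this]
          rw [h0, h1, zero_add]
        rw [hsum]
        have h2 : ∑ i ∈ Finset.Ico a k, P i = g (k - 1) - g (a - 1) := by
          rw [Finset.sum_Ico_eq_sum_range]
          have hstep : ∀ j ∈ Finset.range (k - a), P (a + j)
              = (fun j => g (a - 1 + j)) (j + 1) - (fun j => g (a - 1 + j)) j := by
            intro j hj
            have hj' := Finset.mem_range.mp hj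
            have e1 : a - 1 + (j + 1) = a + j := by omega
            have e2 : a - 1 + j = a + j - 1 := by omega
            simp only [e1, e2]
            exact IH (a + j) (by omega) (by omega)
          rw [Finset.sum_congr rfl hstep, Finset.sum_range_sub (fun j => g (a - 1 + j))]
          have e3 : a - 1 + (k - a) = k - 1 := by omega
          have e4 : a - 1 + 0 = a - 1 := by omega
          simp only [e3, e4]
        rw [h2]
        have hga : g (a - 1) = g k := by
          have hcast : ((a - 1 : ℕ) : ℤ) = (k : ℤ) - x := by omega
          simp only [hg, hcast]
          have : (x ∣ (k : ℤ) - x) ↔ (x ∣ (k : ℤ)) := by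
            constructor
            · intro h; have := dvd_add h (dvd_refl x); simpa using this
            · intro h; exact dvd_sub h (dvd_refl x)
          simp [this]
        rw [hga]
        ring
  intro k hk
  have hcast : ((k : ℤ) - 1) = ((k - 1 : ℕ) : ℤ) := by omega
  rw [key k hk, hcast]
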